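/- (Gentle measurement) Let ρ be a density operator on a finite-dimensional Hilbert space and Π a projector with Tr(Πρ) ≥ 1 − δ for some δ ∈ [0,1]. Let ρ' = ΠρΠ / Tr(Πρ) be the post-measurement state on outcome Π. Then the trace distance satisfies TD(ρ, ρ') ≤ 2√δ. -/

import Mathlib

open Finset ComplexOrder
open scoped MatrixOrder

namespace GentleAux

open Matrix

lemma tr_sq {n : ℕ} (A : Matrix (Fin n) (Fin n) ℂ) :
    (Aᴴ * A).trace.re = ∑ p : Fin n × Fin n, ‖A p.1 p.2‖ ^ 2 := by
  simp only [Matrix.trace, Matrix.diag, Matrix.mul_apply, Matrix.conjTranspose_apply,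
    Fintype.sum_prod_type, Complex.re_sum, Complex.sq_norm]
  rw [Finset.sum_comm]
  simp [Complex.normSq_apply, Complex.mul_re]

lemma trace_cs {n : ℕ} (A B : Matrix (Fin n) (Fin n) ℂ) :
    ‖(Aᴴ * B).trace‖ ≤
      Real.sqrt ((Aᴴ * A).trace.re) * Real.sqrt ((Bᴴ * B).trace.re) := by
  let a : EuclideanSpace ℂ (Fin n × Fin n) := WithLp.toLp 2 (fun p : Fin n × Fin n => A p.1 p.2)
  let b : EuclideanSpace ℂ (Fin n × Fin n) := WithLp.toLp 2 (fun p : Fin n × Fin n => B p.1 p.2)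
  have h1 : (Aᴴ * B).trace = inner ℂ a b := by
    simp only [PiLp.inner_apply, RCLike.inner_apply, a, b, PiLp.toLp_apply, Matrix.trace, Matrix.diag,
      Matrix.mul_apply, Matrix.conjTranspose_apply, Fintype.sum_prod_type, starRingEnd_apply]
    rw [Finset.sum_comm]
    exact Finset.sum_congr rfl fun _ _ => Finset.sum_congr rfl fun _ _ => mul_comm _ _
  calc ‖(Aᴴ * B).trace‖ = ‖inner ℂ a b‖ := by rw [h1]
    _ ≤ ‖a‖ * ‖b‖ := norm_inner_le_norm a b
    _ = _ := by rw [EuclideanSpace.norm_eq, EuclideanSpace.norm_eq, tr_sq, tr_sq]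

lemma trace_psd_nonneg {n : ℕ} {M : Matrix (Fin n) (Fin n) ℂ} (hM : M.PosSemidef) :
    0 ≤ M.trace := by
  have h : ∀ i, 0 ≤ M i i := fun i => by
    exact hM.diag_nonneg
  exact Finset.sum_nonneg fun i _ => h i

lemma trace_psd_real {n : ℕ} {M : Matrix (Fin n) (Fin n) ℂ} (hM : M.PosSemidef) :
    M.trace = (M.trace.re : ℂ) ∧ 0 ≤ M.trace.re := by
  have h := trace_psd_nonneg hM
  rw [Complex.le_def] at h
  simp at h
  exact ⟨by apply Complex.ext <;> simp [h.2], h.1⟩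

lemma trace_proj_le {n : ℕ} {K N : Matrix (Fin n) (Fin n) ℂ} (hK : K.IsHermitian)
    (hK2 : K * K = K) (hN : N.PosSemidef) : (K * N * K).trace.re ≤ N.trace.re := by
  have h2 : ((1 - K) * N * (1 - K)).PosSemidef := by
    have := hN.mul_mul_conjTranspose_same (1 - K)
    rwa [Matrix.conjTranspose_sub, Matrix.conjTranspose_one, hK.eq] at this
  have h3 : N.trace = (K * N * K).trace + ((1 - K) * N * (1 - K)).trace := by
    have e1 : (K * N * K).trace = (K * N).trace := by
      rw [Matrix.trace_mul_cycle, hK2]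
    have e2 : (N * K).trace = (K * N).trace := Matrix.trace_mul_comm _ _
    simp only [Matrix.sub_mul, Matrix.mul_sub, Matrix.one_mul, Matrix.mul_one,
      Matrix.trace_sub]
    rw [e1]
    ring_nf
    rw [e2]
    ring
  have h4 := (trace_psd_real h2).2
  have := congrArg Complex.re h3
  simp only [Complex.add_re] at this
  linarith

lemma abs_trace_mul_le {n : ℕ} {M S : Matrix (Fin n) (Fin n) ℂ} (hM : M.PosSemidef)
    (hS : S * Sᴴ = 1) : ‖(M * S).trace‖ ≤ M.trace.re := by
  set R := CFC.sqrt M with hR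
  have hRH : Rᴴ = R := (CFC.sqrt_nonneg M).posSemidef.isHermitian
  have hRR : R * R = M := CFC.sqrt_mul_sqrt_self M hM.nonneg
  have key : M * S = Rᴴ * (R * S) := by rw [hRH, ← Matrix.mul_assoc, hRR]
  have h2 : (Rᴴ * R).trace = M.trace := by rw [hRH, hRR]
  have h3 : ((R * S)ᴴ * (R * S)).trace = M.trace := by
    rw [Matrix.conjTranspose_mul, hRH]
    calc (Sᴴ * R * (R * S)).trace = (Sᴴ * (R * (R * S))).trace := by rw [Matrix.mul_assoc]
      _ = ((R * (R * S)) * Sᴴ).trace := Matrix.trace_mul_comm _ _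
      _ = M.trace := by
          rw [← Matrix.mul_assoc, hRR, Matrix.mul_assoc, hS, Matrix.mul_one]
  have := trace_cs R (R * S)
  rw [h2, h3, Real.mul_self_sqrt (trace_psd_real hM).2] at this
  rw [key]
  exact this

lemma conj_mul_conj {n : ℕ} {U : Matrix (Fin n) (Fin n) ℂ} (hU2 : Uᴴ * U = 1)
    (D E : Matrix (Fin n) (Fin n) ℂ) :
    (U * D * Uᴴ) * (U * E * Uᴴ) = U * (D * E) * Uᴴ := by
  have h : ∀ X, Uᴴ * (U * X) = X := fun X => by rw [← Matrix.mul_assoc, hU2, Matrix.one_mul]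
  simp only [Matrix.mul_assoc, h]

lemma exists_sign {n : ℕ} {H : Matrix (Fin n) (Fin n) ℂ} (hH : H.IsHermitian) :
    ∃ S : Matrix (Fin n) (Fin n) ℂ, S * Sᴴ = 1 ∧ Sᴴ * S = 1 ∧
      (H * S).trace = ((∑ i, |hH.eigenvalues i| : ℝ) : ℂ) := by
  set U : Matrix (Fin n) (Fin n) ℂ := (hH.eigenvectorUnitary : Matrix (Fin n) (Fin n) ℂ) with hU
  have hU1 : U * Uᴴ = 1 := by
    rw [← Matrix.star_eq_conjTranspose]
    exact (Matrix.mem_unitaryGroup_iff).mp (hH.eigenvectorUnitary).2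
  have hU2 : Uᴴ * U = 1 := by
    rw [← Matrix.star_eq_conjTranspose]
    exact (Matrix.mem_unitaryGroup_iff').mp (hH.eigenvectorUnitary).2
  set d : Fin n → ℂ := fun i => if 0 ≤ hH.eigenvalues i then 1 else -1 with hd
  have hds : (Matrix.diagonal d)ᴴ = Matrix.diagonal d := by
    have h1 : star d = d := by
      funext i
      by_cases h : 0 ≤ hH.eigenvalues i <;> simp [hd, h]
    rw [Matrix.diagonal_conjTranspose, h1]
  have hdd : Matrix.diagonal d * Matrix.diagonal d = 1 := by
    have h2 : (fun i => d i * d i) = fun _ => (1 : ℂ) := by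
      funext i
      by_cases h : 0 ≤ hH.eigenvalues i <;> simp [hd, h]
    rw [Matrix.diagonal_mul_diagonal, h2, Matrix.diagonal_one]
  set S : Matrix (Fin n) (Fin n) ℂ := U * Matrix.diagonal d * Uᴴ with hS
  have hSH : Sᴴ = S := by
    rw [hS, Matrix.conjTranspose_mul, Matrix.conjTranspose_mul,
      Matrix.conjTranspose_conjTranspose, hds, Matrix.mul_assoc]
  have hSS : S * Sᴴ = 1 := by
    rw [hSH, hS, conj_mul_conj hU2, hdd, Matrix.mul_one, hU1]
  refine ⟨S, hSS, by rw [hSH] at hSS ⊢; exact hSS, ?_⟩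
  have hst : H = U * Matrix.diagonal (RCLike.ofReal ∘ hH.eigenvalues) * Uᴴ := by
    rw [hU, ← Matrix.star_eq_conjTranspose]
    exact hH.spectral_theorem
  conv_lhs => rw [hst, hS]
  rw [conj_mul_conj hU2, Matrix.trace_mul_cycle, hU2, Matrix.one_mul,
    Matrix.diagonal_mul_diagonal, Matrix.trace_diagonal]
  push_cast
  apply Finset.sum_congr rfl
  intro i _
  by_cases h : 0 ≤ hH.eigenvalues i
  · simp [hd, h, abs_of_nonneg h]
  · simp only [Pi.mul_apply, hd, if_neg h, Function.comp_apply]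
    rw [abs_of_neg (lt_of_not_ge h)]
    norm_num

end GentleAux

open GentleAux Matrix in
/-- Gentle measurement: if `Tr(Pρ) ≥ 1 − δ` for a projector `P` and a density operator `ρ`,
then the trace distance between `ρ` and the post-measurement state
`ρ' = PρP / Tr(Pρ)` is at most `2√δ`.  The trace distance is expressed as half the sum of
the absolute values of the eigenvalues of the Hermitian matrix `ρ − ρ'`. -/
theorem stmt_3 {n : ℕ} (ρ P : Matrix (Fin n) (Fin n) ℂ) (δ : ℝ)
    (hδ0 : 0 ≤ δ) (hδ1 : δ ≤ 1)
    (hρ : ρ.PosSemidef) (hρtr : ρ.trace = 1)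
    (hP : P.IsHermitian) (hP2 : P * P = P)
    (htr : 1 - δ ≤ (P * ρ).trace.re)
    (ρ' : Matrix (Fin n) (Fin n) ℂ)
    (hρ' : ρ' = ((P * ρ).trace)⁻¹ • (P * ρ * P))
    (hH : (ρ - ρ').IsHermitian) :
    (1 / 2) * ∑ i, |hH.eigenvalues i| ≤ 2 * Real.sqrt δ := by
  classical
  set t : ℂ := (P * ρ).trace with ht
  set p : ℝ := t.re with hpdef
  -- basic positivity facts
  have hPρP : (P * ρ * P).PosSemidef := by
    have := hρ.mul_mul_conjTranspose_same P
    rwa [hP.eq] at this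
  have htP : (P * ρ * P).trace = t := by
    rw [Matrix.trace_mul_cycle, hP2, ht]
  have hpc : t = (p : ℂ) := by
    have := (trace_psd_real hPρP).1; rwa [htP] at this
  have hp0 : 0 ≤ p := by
    have := (trace_psd_real hPρP).2; rwa [htP] at this
  set E : Matrix (Fin n) (Fin n) ℂ := 1 - P with hE
  have hEH : Eᴴ = E := by
    rw [hE, Matrix.conjTranspose_sub, Matrix.conjTranspose_one, hP.eq]
  have hE2 : E * E = E := by
    rw [hE]
    simp only [Matrix.sub_mul, Matrix.mul_sub, Matrix.one_mul, Matrix.mul_one, hP2]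
    abel
  have hEρE : (E * ρ * E).PosSemidef := by
    have := hρ.mul_mul_conjTranspose_same E
    rwa [hEH] at this
  have htE : (E * ρ * E).trace = 1 - t := by
    rw [Matrix.trace_mul_cycle, hE2, hE, Matrix.sub_mul, Matrix.one_mul, Matrix.trace_sub,
      hρtr, ht, ← Matrix.trace_mul_comm]
  have h1p : (E * ρ * E).trace.re = 1 - p := by
    rw [htE]; simp [hpdef]
  have hp1 : p ≤ 1 := by
    have := (trace_psd_real hEρE).2
    rw [h1p] at this; linarith
  have hδp : 1 - p ≤ δ := by
    have : 1 - δ ≤ p := htr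
    linarith
  -- the sign matrix
  obtain ⟨S, hSS, hSS', htrS⟩ := exists_sign hH
  -- square root of ρ
  set Q : Matrix (Fin n) (Fin n) ℂ := CFC.sqrt ρ with hQ
  have hQH : Qᴴ = Q := (CFC.sqrt_nonneg ρ).posSemidef.isHermitian
  have hQQ : Q * Q = ρ := CFC.sqrt_mul_sqrt_self ρ hρ.nonneg
  have hQmul : ∀ X : Matrix (Fin n) (Fin n) ℂ, Q * (Q * X) = ρ * X := fun X => by
    rw [← Matrix.mul_assoc, hQQ]
  -- decomposition of the trace
  have hdecomp : ((ρ - ρ') * S).trace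
      = (E * ρ * S).trace + (P * ρ * E * S).trace + (1 - t⁻¹) * (P * ρ * P * S).trace := by
    have hρdec : ρ - ρ' = E * ρ + P * ρ * E + (1 - t⁻¹) • (P * ρ * P) := by
      rw [hρ', hE]
      simp only [sub_smul, one_smul, Matrix.sub_mul, Matrix.mul_sub, Matrix.one_mul,
        Matrix.mul_one]
      abel
    rw [hρdec]
    simp only [Matrix.add_mul, Matrix.smul_mul, Matrix.trace_add, Matrix.trace_smul,
      smul_eq_mul]
  -- bound term 1
  have hb1 : ‖(E * ρ * S).trace‖ ≤ Real.sqrt (1 - p) := by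
    have he : E * ρ * S = (Q * E)ᴴ * (Q * S) := by
      simp only [Matrix.conjTranspose_mul, hQH, hEH, Matrix.mul_assoc, hQmul]
    have h1m : (Q * E)ᴴ * (Q * E) = E * ρ * E := by
      simp only [Matrix.conjTranspose_mul, hQH, hEH, Matrix.mul_assoc, hQmul]
    have h2m : (Q * S)ᴴ * (Q * S) = Sᴴ * (ρ * S) := by
      simp only [Matrix.conjTranspose_mul, hQH, Matrix.mul_assoc, hQmul]
    have h2 : ((Q * S)ᴴ * (Q * S)).trace.re = 1 := by
      rw [h2m, Matrix.trace_mul_comm, Matrix.mul_assoc, hSS, Matrix.mul_one, hρtr]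
      simp
    have := trace_cs (Q * E) (Q * S)
    rw [h1m, h1p, h2, Real.sqrt_one, mul_one] at this
    rw [he]
    exact this
  -- bound term 2
  have hb2 : ‖(P * ρ * E * S).trace‖ ≤ Real.sqrt (1 - p) := by
    have he : (P * ρ * E * S).trace = (Qᴴ * (Q * (E * (S * P)))).trace := by
      rw [hQH, hQmul]
      calc (P * ρ * E * S).trace = (P * (ρ * (E * S))).trace := by
            rw [Matrix.mul_assoc, Matrix.mul_assoc]
        _ = ((ρ * (E * S)) * P).trace := Matrix.trace_mul_comm _ _
        _ = (ρ * (E * (S * P))).trace := by rw [Matrix.mul_assoc, Matrix.mul_assoc]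
    have hQ2 : (Qᴴ * Q).trace.re = 1 := by
      rw [hQH, hQQ, hρtr]; simp
    have hBB : (Q * (E * (S * P)))ᴴ * (Q * (E * (S * P)))
        = P * (Sᴴ * (E * ρ * E) * S) * P := by
      simp only [Matrix.conjTranspose_mul, hQH, hEH, hP.eq, Matrix.mul_assoc, hQmul]
    have hN : (Sᴴ * (E * ρ * E) * S).PosSemidef := hEρE.conjTranspose_mul_mul_same S
    have hNtr : (Sᴴ * (E * ρ * E) * S).trace.re = 1 - p := by
      rw [Matrix.trace_mul_comm, ← Matrix.mul_assoc, hSS, Matrix.one_mul, h1p]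
    have hPNP : ((Q * (E * (S * P)))ᴴ * (Q * (E * (S * P)))).trace.re ≤ 1 - p := by
      rw [hBB, ← hNtr]
      exact trace_proj_le hP hP2 hN
    have hcs := trace_cs Q (Q * (E * (S * P)))
    rw [hQ2, Real.sqrt_one, one_mul] at hcs
    have : Real.sqrt (((Q * (E * (S * P)))ᴴ * (Q * (E * (S * P)))).trace.re)
        ≤ Real.sqrt (1 - p) := Real.sqrt_le_sqrt hPNP
    rw [he]
    exact le_trans hcs this
  -- bound term 3
  have hb3 : ‖(1 - t⁻¹) * (P * ρ * P * S).trace‖ ≤ 1 - p := by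
    rw [norm_mul]
    have h1 : ‖(P * ρ * P * S).trace‖ ≤ p := by
      have h := abs_trace_mul_le hPρP hSS
      have h2 : (P * ρ * P).trace.re = p := by rw [htP]
      rwa [h2] at h
    have habs : ‖1 - t⁻¹‖ = |1 - p⁻¹| := by
      rw [hpc, ← Complex.ofReal_one, ← Complex.ofReal_inv, ← Complex.ofReal_sub,
        Complex.norm_real, Real.norm_eq_abs]
    rw [habs]
    have hkey : |1 - p⁻¹| * p ≤ 1 - p := by
      rcases eq_or_lt_of_le hp0 with h0 | h0
      · rw [← h0]; simp
      · have h9 : p * p⁻¹ = 1 := mul_inv_cancel₀ h0.ne'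
        have hinv : 1 ≤ p⁻¹ := by nlinarith
        rw [abs_of_nonpos (by linarith)]
        nlinarith
    calc |1 - p⁻¹| * ‖(P * ρ * P * S).trace‖
        ≤ |1 - p⁻¹| * p := mul_le_mul_of_nonneg_left h1 (abs_nonneg _)
      _ ≤ 1 - p := hkey
  -- combine
  have hsum : (∑ i, |hH.eigenvalues i|) ≤ 2 * Real.sqrt (1 - p) + (1 - p) := by
    have h0 : (∑ i, |hH.eigenvalues i|) = (((ρ - ρ') * S).trace).re := by
      rw [htrS, Complex.ofReal_re]
    have h1 : (((ρ - ρ') * S).trace).re ≤ ‖((ρ - ρ') * S).trace‖ :=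
      Complex.re_le_norm _
    have h2 : ‖((ρ - ρ') * S).trace‖
        ≤ ‖(E * ρ * S).trace‖ + ‖(P * ρ * E * S).trace‖
          + ‖(1 - t⁻¹) * (P * ρ * P * S).trace‖ := by
      rw [hdecomp]
      exact le_trans (norm_add_le _ _)
        (add_le_add_left (norm_add_le _ _) _)
    rw [h0]
    linarith
  have hs1 : Real.sqrt (1 - p) ≤ Real.sqrt δ := Real.sqrt_le_sqrt hδp
  have hs2 : δ ≤ Real.sqrt δ := by
    have h3 := Real.sq_sqrt hδ0
    have h4 := Real.sqrt_le_one.mpr hδ1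
    nlinarith [Real.sqrt_nonneg δ]
  have hs0 : 0 ≤ Real.sqrt δ := Real.sqrt_nonneg δ
  linarith
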